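/- Let P be a finite set, let B and Q be m × P complex matrices and s ∈ ℂ^m, and let A := {(v,i) ∈ ℂ^P × ℂ^P : Bv − Qi = s}. A point (v°,i°) ∈ A is a stationary point of the absorbed power function (v,i) ↦ ⟨v,i⟩ + ⟨i,v⟩ = 2·Re⟨v,i⟩ on A, meaning that Re(⟨i°,δv⟩ + ⟨v°,δi⟩) = 0 for every (δv,δi) ∈ ℂ^P × ℂ^P with B·δv − Q·δi = 0, if and only if there exists λ ∈ ℂ^m with v° = −Q*·λ and i° = B*·λ (where Q* and B* denote conjugate transposes). -/

import Mathlib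

open Matrix

/-!
STATEMENT 14: Let P be a finite set, B and Q be m × P complex matrices, s ∈ ℂ^m, and
A := {(v,i) : Bv − Qi = s}. A point (v°,i°) ∈ A is a stationary point of the absorbed
power (v,i) ↦ 2·Re⟨v,i⟩ on A — i.e. Re(⟨i°,δv⟩ + ⟨v°,δi⟩) = 0 for every (δv,δi) with
B·δv − Q·δi = 0 — if and only if there exists λ ∈ ℂ^m with v° = −Q*·λ and i° = B*·λ.
-/

/-- Hermitian inner product on `ℂ^X`: `⟨f,g⟩ = Σ_e f e * conj (g e)`. -/
noncomputable def hinner {X : Type*} [Fintype X] (f g : X → ℂ) : ℂ :=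
  ∑ e, f e * (starRingEnd ℂ) (g e)

section aux14
variable {P : Type*} [Fintype P] {m : ℕ}

/-- The stacked matrix `[B | -Q]`. -/
def stk14 (B Q : Matrix (Fin m) P ℂ) : Matrix (Fin m) (P ⊕ P) ℂ :=
  Matrix.of fun j => Sum.elim (B j) (fun p => -(Q j p))

lemma stk14_mulVec (B Q : Matrix (Fin m) P ℂ) (x : P ⊕ P → ℂ) :
    (stk14 B Q).mulVec x = B.mulVec (x ∘ Sum.inl) - Q.mulVec (x ∘ Sum.inr) := by
  funext j
  simp [stk14, Matrix.mulVec, dotProduct, Fintype.sum_sum_type, sub_eq_add_neg,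
    ← Finset.sum_neg_distrib, neg_mul]

end aux14

theorem statement14 (P : Type*) [Fintype P] (m : ℕ)
    (B Q : Matrix (Fin m) P ℂ) (s : Fin m → ℂ) (v0 i0 : P → ℂ)
    (hmem : B.mulVec v0 - Q.mulVec i0 = s) :
    (∀ δv δi : P → ℂ, B.mulVec δv - Q.mulVec δi = 0 →
        (hinner i0 δv + hinner v0 δi).re = 0) ↔
      ∃ lam : Fin m → ℂ, v0 = -(Qᴴ.mulVec lam) ∧ i0 = Bᴴ.mulVec lam := by
  classical
  set M : Matrix (Fin m) (P ⊕ P) ℂ := stk14 B Q with hM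
  set T : EuclideanSpace ℂ (P ⊕ P) →ₗ[ℂ] EuclideanSpace ℂ (Fin m) := Matrix.toEuclideanLin M
    with hT
  set z : EuclideanSpace ℂ (P ⊕ P) := (WithLp.equiv 2 _).symm (Sum.elim i0 v0) with hz
  have bridge : ∀ δ : EuclideanSpace ℂ (P ⊕ P),
      hinner i0 (fun p => δ (Sum.inl p)) + hinner v0 (fun p => δ (Sum.inr p))
        = (inner ℂ δ z : ℂ) := by
    intro δ
    simp [hinner, PiLp.inner_apply, hz, Fintype.sum_sum_type,
      WithLp.equiv_symm_apply, mul_comm]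
  have hker : ∀ δ : EuclideanSpace ℂ (P ⊕ P),
      δ ∈ LinearMap.ker T ↔
        B.mulVec (fun p => δ (Sum.inl p)) - Q.mulVec (fun p => δ (Sum.inr p)) = 0 := by
    intro δ
    rw [LinearMap.mem_ker]
    have : T δ = (WithLp.equiv 2 (Fin m → ℂ)).symm (M.mulVec (WithLp.equiv 2 _ δ)) := rfl
    rw [this, hM, stk14_mulVec]
    constructor
    · intro h
      have := congrArg (WithLp.equiv 2 (Fin m → ℂ)) h
      simpa [Function.comp_def] using this
    · intro h
      rw [show ((fun p => δ (Sum.inl p)) : P → ℂ) = (WithLp.equiv 2 _ δ) ∘ Sum.inl from rfl,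
        show ((fun p => δ (Sum.inr p)) : P → ℂ) = (WithLp.equiv 2 _ δ) ∘ Sum.inr from rfl] at h
      rw [h]
      simp
  -- adjoint
  have hadj : LinearMap.adjoint T = Matrix.toEuclideanLin Mᴴ :=
    (Matrix.toEuclideanLin_conjTranspose_eq_adjoint M).symm
  have hkerortho : LinearMap.ker T = (LinearMap.range (LinearMap.adjoint T))ᗮ := by
    ext δ
    rw [LinearMap.mem_ker, Submodule.mem_orthogonal]
    constructor
    · rintro h _ ⟨y, rfl⟩
      rw [LinearMap.adjoint_inner_left, h, inner_zero_right]
    · intro h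
      have := h (LinearMap.adjoint T (T δ)) ⟨T δ, rfl⟩
      rw [LinearMap.adjoint_inner_left] at this
      exact inner_self_eq_zero.mp this
  constructor
  · intro hstat
    have hz_mem : z ∈ (LinearMap.ker T)ᗮ := by
      rw [Submodule.mem_orthogonal]
      intro δ hδ
      have h1 : (inner ℂ δ z : ℂ).re = 0 := by
        rw [← bridge δ]
        exact hstat _ _ ((hker δ).mp hδ)
      have h2 : (inner ℂ δ z : ℂ).im = 0 := by
        have hδ' : (Complex.I • δ) ∈ LinearMap.ker T := Submodule.smul_mem _ _ hδ
        have h3 : (inner ℂ (Complex.I • δ) z : ℂ).re = 0 := by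
          rw [← bridge _]
          exact hstat _ _ ((hker _).mp hδ')
        rw [inner_smul_left] at h3
        simpa [Complex.ext_iff] using h3
      exact Complex.ext h1 h2
    rw [hkerortho, Submodule.orthogonal_orthogonal] at hz_mem
    obtain ⟨lam, hlam⟩ := hz_mem
    rw [hadj] at hlam
    refine ⟨WithLp.equiv 2 _ lam, ?_, ?_⟩
    · funext p
      have := congrFun (congrArg (WithLp.equiv 2 _) hlam) (Sum.inr p)
      simp only [WithLp.equiv_apply, Matrix.piLp_ofLp_toEuclideanLin] at this
      rw [hz] at this
      simp only [WithLp.equiv_symm_apply] at this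
      rw [WithLp.ofLp_toLp] at this
      simp only [Sum.elim_inr] at this
      rw [← this]
      simp only [Matrix.toLin'_apply, Matrix.mulVec, dotProduct, Pi.neg_apply]
      rw [← Finset.sum_neg_distrib]
      refine Finset.sum_congr rfl fun j _ => ?_
      simp [Matrix.conjTranspose_apply, hM, stk14]
    · funext p
      have := congrFun (congrArg (WithLp.equiv 2 _) hlam) (Sum.inl p)
      simp only [WithLp.equiv_apply, Matrix.piLp_ofLp_toEuclideanLin] at this
      rw [hz] at this
      simp only [WithLp.equiv_symm_apply, WithLp.ofLp_toLp] at this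
      simp only [Sum.elim_inl] at this
      rw [← this]
      simp only [Matrix.toLin'_apply, Matrix.mulVec, dotProduct]
      refine Finset.sum_congr rfl fun j _ => ?_
      simp [Matrix.conjTranspose_apply, hM, stk14]
  · rintro ⟨lam, hv, hi⟩ δv δi hδ
    -- z = adjoint T applied to lam'
    set lam' : EuclideanSpace ℂ (Fin m) := (WithLp.equiv 2 _).symm lam with hlam'
    have hzeq : z = LinearMap.adjoint T lam' := by
      rw [hadj]
      apply (WithLp.equiv 2 ((e : P ⊕ P) → ℂ)).injective
      funext e
      simp only [WithLp.equiv_apply, Matrix.piLp_ofLp_toEuclideanLin, Matrix.toLin'_apply]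
      rw [show WithLp.ofLp ((WithLp.equiv 2 ((e : P ⊕ P) → ℂ)).symm (Sum.elim i0 v0)) = Sum.elim i0 v0 from rfl,
        show WithLp.ofLp lam' = lam from rfl]
      cases e with
      | inl p =>
        simp only [Sum.elim_inl, hi]
        simp [Matrix.mulVec, dotProduct, Matrix.conjTranspose_apply, hM, stk14]
      | inr p =>
        simp only [Sum.elim_inr, hv]
        simp [Matrix.mulVec, dotProduct, Matrix.conjTranspose_apply, hM, stk14,
          ← Finset.sum_neg_distrib]
    set δ : EuclideanSpace ℂ (P ⊕ P) := (WithLp.equiv 2 _).symm (Sum.elim δv δi) with hδdef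
    have hδker : δ ∈ LinearMap.ker T := by
      rw [hker]
      convert hδ using 3 <;> rfl
    have : (inner ℂ δ z : ℂ) = 0 := by
      rw [hzeq, LinearMap.adjoint_inner_right, LinearMap.mem_ker.mp hδker, inner_zero_left]
    have hb := bridge δ
    rw [show ((fun p => δ (Sum.inl p)) : P → ℂ) = δv from rfl,
      show ((fun p => δ (Sum.inr p)) : P → ℂ) = δi from rfl] at hb
    rw [hb, this]
    simp
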